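/- Let 𝒫 be a d×2d real matrix satisfying the maximal isotropy condition 𝒫 η 𝒫^T = 0, where η = ((0,1_d),(1_d,0)). If f = f̃ ∘ 𝒫 and g = g̃ ∘ 𝒫 for differentiable functions f̃, g̃ : ℝ^d → ℝ (with 𝒫 : ℝ^{2d} → ℝ^d the induced linear map), then η^{IJ} ∂_I f ∂_J g = 0 at every point of ℝ^{2d}; i.e. functions pulled back along a maximally isotropic polarization automatically satisfy the strong constraint of DFT. -/
import Mathlib


open scoped BigOperators Matrix

noncomputable section

/-- Doubled index set: `I = 1,…,2d`, realized as `Fin d ⊕ Fin d`. -/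
abbrev DIdx (d : ℕ) := Fin d ⊕ Fin d

/-- The doubled space `ℝ^{2d}`. -/
abbrev DSpace (d : ℕ) := DIdx d → ℝ

/-- The constant O(d,d)-invariant metric `η = ((0,1_d),(1_d,0))`; numerically `η⁻¹ = η`. -/
def eta {d : ℕ} : DIdx d → DIdx d → ℝ
  | Sum.inl i, Sum.inr j => if i = j then 1 else 0
  | Sum.inr i, Sum.inl j => if i = j then 1 else 0
  | _, _ => 0

/-- Partial derivative `∂_I f (x)`. -/
def pd {d : ℕ} (f : DSpace d → ℝ) (I : DIdx d) (x : DSpace d) : ℝ :=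
  fderiv ℝ f x (Pi.single I 1)

/-- Lowered components `A_I := η_{IJ} A^J`. -/
def low {d : ℕ} (A : DSpace d → DSpace d) (I : DIdx d) : DSpace d → ℝ :=
  fun x => ∑ J, eta I J * A x J

/-- Raised derivative `∂^I f := η^{IJ} ∂_J f`. -/
def pdU {d : ℕ} (f : DSpace d → ℝ) (I : DIdx d) (x : DSpace d) : ℝ :=
  ∑ J, eta I J * pd f J x

/-- The split-signature metric `η` as a matrix. -/
def etaM (d : ℕ) : Matrix (DIdx d) (DIdx d) ℝ := Matrix.of fun I J => eta I J

/-- Functions pulled back along a maximally isotropic polarization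
`𝒫 : ℝ^{2d} → ℝ^d` (with `𝒫 η 𝒫ᵀ = 0`) automatically satisfy the strong constraint
`η^{IJ} ∂_I f ∂_J g = 0`. -/

lemma pd_comp {d : ℕ} (P : Matrix (Fin d) (DIdx d) ℝ)
    (ft : (Fin d → ℝ) → ℝ) (hft : Differentiable ℝ ft) (x : DSpace d) (I : DIdx d) :
    pd (fun y => ft (P.mulVec y)) I x
      = ∑ a, (fderiv ℝ ft (P.mulVec x) (Pi.single a 1)) * P a I := by
  classical
  set L : DSpace d →L[ℝ] (Fin d → ℝ) := LinearMap.toContinuousLinearMap P.mulVecLin with hL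
  have hLy : ∀ y, P.mulVec y = L y := fun y => rfl
  have hfun : (fun y => ft (P.mulVec y)) = ft ∘ L := rfl
  have hder : fderiv ℝ (ft ∘ L) x = (fderiv ℝ ft (L x)).comp L := by
    rw [fderiv_comp x (hft (L x)) L.differentiableAt, L.fderiv]
  have hsingle : L (Pi.single I 1) = ∑ a, (P a I) • (Pi.single a 1 : Fin d → ℝ) := by
    funext b
    simp [hL, Matrix.mulVecLin, Matrix.mulVec_single, Finset.sum_apply,
      Pi.single_apply, mul_comm]
  rw [pd, hfun, hder]
  simp only [ContinuousLinearMap.coe_comp', Function.comp_apply, hsingle, map_sum,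
    map_smul]
  rw [hLy]
  simp [smul_eq_mul, mul_comm]

theorem statement12 {d : ℕ} (P : Matrix (Fin d) (DIdx d) ℝ)
    (hP : P * etaM d * P.transpose = 0)
    (ft gt : (Fin d → ℝ) → ℝ)
    (hft : Differentiable ℝ ft) (hgt : Differentiable ℝ gt)
    (x : DSpace d) :
    ∑ I, ∑ J, eta I J * pd (fun y => ft (P.mulVec y)) I x
        * pd (fun y => gt (P.mulVec y)) J x = 0 := by
  classical
  set c : Fin d → ℝ := fun a => fderiv ℝ ft (P.mulVec x) (Pi.single a 1) with hc
  set c' : Fin d → ℝ := fun a => fderiv ℝ gt (P.mulVec x) (Pi.single a 1) with hc'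
  have h1 : ∀ I, pd (fun y => ft (P.mulVec y)) I x = ∑ a, c a * P a I :=
    fun I => pd_comp P ft hft x I
  have h2 : ∀ J, pd (fun y => gt (P.mulVec y)) J x = ∑ b, c' b * P b J :=
    fun J => pd_comp P gt hgt x J
  have goal2 : Matrix.vecMul c P ⬝ᵥ (etaM d *ᵥ Matrix.vecMul c' P) = 0 := by
    rw [Matrix.dotProduct_mulVec, Matrix.vecMul_vecMul, ← Matrix.mulVec_transpose P c',
      Matrix.dotProduct_mulVec, Matrix.vecMul_vecMul, hP]
    simp
  calc ∑ I, ∑ J, eta I J * pd (fun y => ft (P.mulVec y)) I x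
        * pd (fun y => gt (P.mulVec y)) J x
      = Matrix.vecMul c P ⬝ᵥ (etaM d *ᵥ Matrix.vecMul c' P) := by
        simp only [h1, h2, dotProduct, Matrix.mulVec, Matrix.vecMul, etaM,
          Matrix.of_apply, Finset.mul_sum]
        refine Finset.sum_congr rfl fun I _ => Finset.sum_congr rfl fun J _ => ?_
        refine Finset.sum_congr rfl fun b _ => ?_
        rw [← Finset.mul_sum]
        ring
    _ = 0 := goal2
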